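/- arXiv:1411.7630 — 3 statements merged into one kernel-verified Lean document; each statement's English description precedes it below -/
import Mathlib

section
/- Let λ ∈ {±1}ⁿ be any Golay sequence, Λ = diag(λ), and F the n × n normalized DFT matrix. Then the coherence satisfies μ(F Λ F*) ≤ √(2/n), i.e., every entry of the matrix F Λ F* has absolute value at most √(2/n). -/
open MeasureTheory ProbabilityTheory Matrix
open scoped BigOperators

noncomputable section

/-- Squared ℓ² norm of a complex vector. -/
def l2normSq {n : ℕ} (x : Fin n → ℂ) : ℝ := ∑ i, ‖x i‖ ^ 2

/-- `x` has at most `s` nonzero entries. -/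
def SparseLe {n : ℕ} (s : ℕ) (x : Fin n → ℂ) : Prop :=
  (Finset.univ.filter fun i => x i ≠ 0).card ≤ s

/-- The restricted isometry constant of order `s` of `A` is at most `δ`. -/
def RIPLe {m n : ℕ} (A : Matrix (Fin m) (Fin n) ℂ) (s : ℕ) (δ : ℝ) : Prop :=
  ∀ x : Fin n → ℂ, SparseLe s x →
    (1 - δ) * l2normSq x ≤ l2normSq (A.mulVec x) ∧
    l2normSq (A.mulVec x) ≤ (1 + δ) * l2normSq x

/-- The coherence of a matrix: the maximum absolute value of its entries. -/
def coherence {m n : ℕ} (A : Matrix (Fin m) (Fin n) ℂ) : ℝ :=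
  ⨆ j : Fin m, ⨆ k : Fin n, ‖A j k‖

/-- A unit-norm tight frame: `m ≤ n`, unit-norm columns, and `V Vᴴ = (n/m) I`. -/
def IsUTF {m n : ℕ} (V : Matrix (Fin m) (Fin n) ℂ) : Prop :=
  m ≤ n ∧ (∀ k, ∑ j, ‖V j k‖ ^ 2 = 1) ∧
    V * V.conjTranspose = ((n : ℂ) / (m : ℂ)) • 1

/-- A real random variable is `r`-subgaussian. -/
def IsSubgaussian {Ω : Type*} [MeasurableSpace Ω] (μ : Measure Ω) (r : ℝ) (X : Ω → ℝ) : Prop :=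
  ∀ t : ℝ, ∫ ω, Real.exp (t * X ω) ∂μ ≤ Real.exp (r ^ 2 * t ^ 2 / 2)

/-- A random vector with independent, zero-mean, unit-variance, `r`-subgaussian entries. -/
def IsSubgaussianVec {Ω : Type*} [MeasurableSpace Ω] (μ : Measure Ω) (r : ℝ) {n : ℕ}
    (ξ : Ω → Fin n → ℝ) : Prop :=
  iIndepFun (fun i ω => ξ ω i) μ ∧
  (∀ i, Measurable fun ω => ξ ω i) ∧
  (∀ i, ∫ ω, ξ ω i ∂μ = 0) ∧
  (∀ i, ∫ ω, (ξ ω i) ^ 2 ∂μ = 1) ∧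
  (∀ i, IsSubgaussian μ r fun ω => ξ ω i)

/-- A Rademacher random vector: independent entries, uniform on `{1, -1}`. -/
def IsRademacherVec {Ω : Type*} [MeasurableSpace Ω] (μ : Measure Ω) {n : ℕ}
    (ξ : Ω → Fin n → ℝ) : Prop :=
  iIndepFun (fun i ω => ξ ω i) μ ∧
  (∀ i, Measurable fun ω => ξ ω i) ∧
  (∀ i, μ {ω | ξ ω i = 1} = 1/2 ∧ μ {ω | ξ ω i = -1} = 1/2)

/-- The normalized `n × n` DFT matrix. -/
def DFT (n : ℕ) : Matrix (Fin n) (Fin n) ℂ :=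
  fun j k => ((1 / Real.sqrt n : ℝ) : ℂ) *
    Complex.exp (-2 * Real.pi * Complex.I * ((j : ℕ) : ℂ) * ((k : ℕ) : ℂ) / (n : ℂ))

/-- The failure probability `n ^ (−(log n)(log s)²)`. -/
def failProb (n s : ℕ) : ℝ := (n : ℝ) ^ (-(Real.log n) * (Real.log s) ^ 2)

/-- `a` is a Golay sequence: a `±1` sequence admitting a complementary `±1` sequence `b`
with `|A(z)|² + |B(z)|² = 2n` on the unit circle. -/
def IsGolay {n : ℕ} (a : Fin n → ℝ) : Prop :=
  (∀ k, a k = 1 ∨ a k = -1) ∧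
  ∃ b : Fin n → ℝ, (∀ k, b k = 1 ∨ b k = -1) ∧
    ∀ z : ℂ, ‖z‖ = 1 →
      ‖∑ k, (a k : ℂ) * z ^ (k : ℕ)‖ ^ 2 +
      ‖∑ k, (b k : ℂ) * z ^ (k : ℕ)‖ ^ 2 = 2 * n

/-- The matrix `P₁ = I_m ⊗ 1_qᵀ`. -/
def P1 (m q : ℕ) : Matrix (Fin m) (Fin (m * q)) ℂ :=
  fun j k => if (k : ℕ) / q = (j : ℕ) then 1 else 0

/-- coherence bound `μ(F Λ F*) ≤ √(2/n)` for a Golay modulation `Λ`. -/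
theorem golay_coherence_fourier (n : ℕ) (hn : 0 < n) (lam : Fin n → ℝ) (hlam : IsGolay lam) :
    ∀ (j k : Fin n),
      ‖(DFT n * Matrix.diagonal (fun i => ((lam i : ℝ) : ℂ)) *
        (DFT n).conjTranspose) j k‖ ≤ Real.sqrt (2 / n) := by
  intro j k
  obtain ⟨hpm, b, hb, hgolay⟩ := hlam
  set θ : ℝ := 2 * Real.pi * (((k : ℕ) : ℝ) - ((j : ℕ) : ℝ)) / n with hθ
  set z : ℂ := Complex.exp ((θ : ℂ) * Complex.I) with hzdef
  have hzabs : ‖z‖ = 1 := Complex.norm_exp_ofReal_mul_I θ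
  have hne : (n : ℂ) ≠ 0 := Nat.cast_ne_zero.mpr hn.ne'
  have hnR : (0 : ℝ) < (n : ℝ) := by exact_mod_cast hn
  have hsq : Real.sqrt n ≠ 0 := Real.sqrt_ne_zero'.mpr hnR
  have hsqC : ((Real.sqrt n : ℝ) : ℂ) ≠ 0 := by exact_mod_cast hsq
  have hentry : ((DFT n * Matrix.diagonal (fun i => ((lam i : ℝ) : ℂ)) *
      (DFT n).conjTranspose) j k) = (1 / (n : ℂ)) * ∑ i, ((lam i : ℝ) : ℂ) * z ^ (i : ℕ) := by
    rw [Matrix.mul_apply, Finset.mul_sum]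
    refine Finset.sum_congr rfl fun i _ => ?_
    simp only [Matrix.mul_diagonal, Matrix.conjTranspose_apply, DFT, Complex.star_def, _root_.map_mul,
      Complex.conj_ofReal, ← Complex.exp_conj]
    rw [hzdef, ← Complex.exp_nat_mul]
    have hsqsq : ((Real.sqrt n : ℝ) : ℂ) * ((Real.sqrt n : ℝ) : ℂ) = (n : ℂ) := by
      rw [← Complex.ofReal_mul, Real.mul_self_sqrt hnR.le]; norm_cast
    have harg : (starRingEnd ℂ) (-2 * ↑Real.pi * Complex.I * ((k : ℕ) : ℂ) * ((i : ℕ) : ℂ) / (n : ℂ))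
        = 2 * ↑Real.pi * Complex.I * ((k : ℕ) : ℂ) * ((i : ℕ) : ℂ) / (n : ℂ) := by
      simp only [map_div₀, _root_.map_mul, map_neg, map_ofNat, map_natCast,
        Complex.conj_ofReal, Complex.conj_I]
      ring
    have hexp : -2 * ↑Real.pi * Complex.I * ((j : ℕ) : ℂ) * ((i : ℕ) : ℂ) / (n : ℂ) +
        2 * ↑Real.pi * Complex.I * ((k : ℕ) : ℂ) * ((i : ℕ) : ℂ) / (n : ℂ)
        = ((i : ℕ) : ℂ) * ((θ : ℂ) * Complex.I) := by
      rw [hθ]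
      push_cast
      field_simp
      ring
    rw [harg, ← hexp, Complex.exp_add]
    field_simp [hsqsq]
    ring_nf
    rw [Complex.ofReal_inv, inv_pow, ← Complex.ofReal_pow, Real.sq_sqrt hnR.le, Complex.ofReal_natCast, inv_mul_cancel₀ hne, one_mul]
  rw [hentry]
  have hA := hgolay z hzabs
  have hB : (0 : ℝ) ≤ ‖∑ i, ((b i : ℝ) : ℂ) * z ^ (i : ℕ)‖ ^ 2 := by positivity
  have hAle : ‖∑ i, ((lam i : ℝ) : ℂ) * z ^ (i : ℕ)‖ ^ 2 ≤ 2 * n := by linarith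
  have hAbs : ‖∑ i, ((lam i : ℝ) : ℂ) * z ^ (i : ℕ)‖ ≤ Real.sqrt (2 * n) := by
    rw [← Real.sqrt_sq (norm_nonneg _)]
    exact Real.sqrt_le_sqrt hAle
  rw [norm_mul]
  have h1n : ‖(1 / (n : ℂ))‖ = 1 / (n : ℝ) := by
    rw [norm_div, norm_one, Complex.norm_natCast]
  rw [h1n]
  have hfin : (1 / (n : ℝ)) * Real.sqrt (2 * n) = Real.sqrt (2 / n) := by
    rw [show (2 / (n : ℝ)) = (2 * n) / (n ^ 2) by field_simp,
      Real.sqrt_div' , Real.sqrt_sq hnR.le]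
    · ring
    · positivity
  calc (1 / (n : ℝ)) * ‖∑ i, ((lam i : ℝ) : ℂ) * z ^ (i : ℕ)‖
      ≤ (1 / (n : ℝ)) * Real.sqrt (2 * n) := by
        apply mul_le_mul_of_nonneg_left hAbs; positivity
    _ = Real.sqrt (2 / n) := hfin
end
end

section
/- Let λ ∈ {±1}ⁿ be any Golay sequence, Λ = diag(λ), F the n × n normalized DFT matrix, and C the n × n orthonormal Type-II DCT matrix. Then the coherence satisfies μ(F Λ C*) ≤ 2/√n, i.e., every entry of F Λ C* has absolute value at most 2/√n. -/
open MeasureTheory ProbabilityTheory Matrix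
open scoped BigOperators

noncomputable section

/-- The orthonormal Type-II DCT matrix. -/
def DCT (n : ℕ) : Matrix (Fin n) (Fin n) ℂ :=
  fun j k => (((if (j : ℕ) = 0 then Real.sqrt (1 / n) else Real.sqrt (2 / n)) *
    Real.cos (Real.pi * (j : ℕ) * (2 * (k : ℕ) + 1) / (2 * n)) : ℝ) : ℂ)

/-- coherence bound `μ(F Λ C*) ≤ 2/√n` for a Golay modulation `Λ` and the
Type-II DCT matrix `C`. -/
theorem golay_coherence_dct (n : ℕ) (hn : 0 < n) (lam : Fin n → ℝ) (hlam : IsGolay lam) :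
    ∀ (j k : Fin n),
      ‖(DFT n * Matrix.diagonal (fun i => ((lam i : ℝ) : ℂ)) *
        (DCT n).conjTranspose) j k‖ ≤ 2 / Real.sqrt n := by
  intro j k
  have hn0 : (0:ℝ) < (n:ℝ) := by exact_mod_cast hn
  have hnC : (n:ℂ) ≠ 0 := by exact_mod_cast hn.ne'
  obtain ⟨hpm, b, hb, hgolay⟩ := hlam
  -- Golay polynomial bound on the unit circle
  have hA : ∀ z : ℂ, ‖z‖ = 1 →
      ‖(∑ m, (lam m : ℂ) * z ^ (m : ℕ))‖ ≤ Real.sqrt (2 * n) := by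
    intro z hz
    have h := hgolay z hz
    have hb2 : (0:ℝ) ≤ ‖(∑ m, (b m : ℂ) * z ^ (m : ℕ))‖ ^ 2 := by positivity
    refine (Real.le_sqrt (norm_nonneg _) (by positivity)).2 ?_
    linarith
  set c : ℝ := if (k : ℕ) = 0 then Real.sqrt (1 / n) else Real.sqrt (2 / n) with hcdef
  have hc0 : 0 ≤ c := by rw [hcdef]; split_ifs <;> positivity
  have hcle : c ≤ Real.sqrt (2 / n) := by
    rw [hcdef]; split_ifs
    · exact Real.sqrt_le_sqrt (by
        apply div_le_div_of_nonneg_right (by norm_num) hn0.le)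
    · exact le_refl _
  set α : ℝ := Real.pi * (k : ℕ) / (2 * n) with hα
  set θ₁ : ℝ := (Real.pi * (k : ℕ) - 2 * Real.pi * (j : ℕ)) / n with hθ₁
  set θ₂ : ℝ := (-(Real.pi * (k : ℕ)) - 2 * Real.pi * (j : ℕ)) / n with hθ₂
  have key : (DFT n * Matrix.diagonal (fun i => ((lam i : ℝ) : ℂ)) *
        (DCT n).conjTranspose) j k
      = ((c / (2 * Real.sqrt n) : ℝ) : ℂ) *
        (Complex.exp ((α : ℂ) * Complex.I) *
            ∑ m, (lam m : ℂ) * (Complex.exp ((θ₁ : ℂ) * Complex.I)) ^ (m : ℕ)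
          + Complex.exp ((-α : ℂ) * Complex.I) *
            ∑ m, (lam m : ℂ) * (Complex.exp ((θ₂ : ℂ) * Complex.I)) ^ (m : ℕ)) := by
    rw [Matrix.mul_apply]
    simp only [Matrix.mul_diagonal, Matrix.conjTranspose_apply, DCT, DFT,
      Complex.star_def, Complex.conj_ofReal]
    rw [Finset.mul_sum, Finset.mul_sum, mul_add, Finset.mul_sum, Finset.mul_sum,
      ← Finset.sum_add_distrib]
    refine Finset.sum_congr rfl fun m _ => ?_
    rw [Complex.ofReal_mul, Complex.ofReal_cos]
    rw [Complex.cos]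
    rw [← hcdef]
    have hcc : ((c / (2 * Real.sqrt n) : ℝ) : ℂ)
        = ((1 / Real.sqrt n : ℝ) : ℂ) * ((c : ℝ) : ℂ) / 2 := by
      push_cast; ring
    have e1 : Complex.exp (-2 * (Real.pi : ℂ) * Complex.I * ((j : ℕ) : ℂ) * ((m : ℕ) : ℂ) / (n : ℂ))
          * Complex.exp (((Real.pi * (k : ℕ) * (2 * (m : ℕ) + 1) / (2 * n) : ℝ) : ℂ) * Complex.I)
        = Complex.exp ((α : ℂ) * Complex.I) * Complex.exp ((θ₁ : ℂ) * Complex.I) ^ (m : ℕ) := by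
      rw [← Complex.exp_nat_mul, ← Complex.exp_add, ← Complex.exp_add]
      congr 1
      rw [hα, hθ₁]; push_cast; field_simp; ring
    have e2 : Complex.exp (-2 * (Real.pi : ℂ) * Complex.I * ((j : ℕ) : ℂ) * ((m : ℕ) : ℂ) / (n : ℂ))
          * Complex.exp (-((Real.pi * (k : ℕ) * (2 * (m : ℕ) + 1) / (2 * n) : ℝ) : ℂ) * Complex.I)
        = Complex.exp (-(α : ℂ) * Complex.I) * Complex.exp ((θ₂ : ℂ) * Complex.I) ^ (m : ℕ) := by
      rw [← Complex.exp_nat_mul, ← Complex.exp_add, ← Complex.exp_add]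
      congr 1
      rw [hα, hθ₂]; push_cast; field_simp; ring
    rw [hcc]
    linear_combination (((1 / Real.sqrt n : ℝ) : ℂ) * ((c : ℝ) : ℂ) * ((lam m : ℝ) : ℂ) / 2) * e1
      + (((1 / Real.sqrt n : ℝ) : ℂ) * ((c : ℝ) : ℂ) * ((lam m : ℝ) : ℂ) / 2) * e2
  -- final bound
  have hsn : (0:ℝ) < Real.sqrt n := Real.sqrt_pos.2 hn0
  have h1 := hA _ (Complex.norm_exp_ofReal_mul_I θ₁)
  have h2 := hA _ (Complex.norm_exp_ofReal_mul_I θ₂)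
  have habs : ‖
      (Complex.exp ((α : ℂ) * Complex.I) *
          ∑ m, (lam m : ℂ) * (Complex.exp ((θ₁ : ℂ) * Complex.I)) ^ (m : ℕ)
        + Complex.exp ((-α : ℂ) * Complex.I) *
          ∑ m, (lam m : ℂ) * (Complex.exp ((θ₂ : ℂ) * Complex.I)) ^ (m : ℕ))‖
      ≤ 2 * Real.sqrt (2 * n) := by
    refine le_trans (norm_add_le _ _) ?_
    rw [norm_mul, norm_mul, Complex.norm_exp_ofReal_mul_I,
      show (-(α : ℝ) : ℂ) = ((-α : ℝ) : ℂ) by push_cast; ring,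
      Complex.norm_exp_ofReal_mul_I, one_mul, one_mul]
    linarith
  have hmul : Real.sqrt (2 / n) * Real.sqrt (2 * n) = 2 := by
    rw [← Real.sqrt_mul (by positivity)]
    rw [show (2 / (n:ℝ)) * (2 * n) = 4 by field_simp; ring]
    rw [show (4:ℝ) = 2 ^ 2 by norm_num, Real.sqrt_sq (by norm_num : (0:ℝ) ≤ 2)]
  rw [key, norm_mul, Complex.norm_real, Real.norm_eq_abs, abs_of_nonneg (by positivity)]
  calc c / (2 * Real.sqrt n) * ‖_‖
      ≤ c / (2 * Real.sqrt n) * (2 * Real.sqrt (2 * n)) := by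
        exact mul_le_mul_of_nonneg_left habs (by positivity)
    _ = c * Real.sqrt (2 * n) / Real.sqrt n := by ring
    _ ≤ Real.sqrt (2 / n) * Real.sqrt (2 * n) / Real.sqrt n := by gcongr
    _ = 2 / Real.sqrt n := by rw [hmul]
end
end

section
/- Let n = 2^d, let λ ∈ {±1}ⁿ be the Golay sequence produced by the Rudin–Shapiro iterative process, Λ = diag(λ), F the n × n normalized DFT matrix, and W* the n × n orthonormal Haar wavelet matrix defined recursively by W₁* = [1] and W_{2^{l+1}}* = (1/√2) [ W_{2^l}* ⊗ (1,1)^T , I_{2^l} ⊗ (1,−1)^T ]. Then the coherence satisfies μ(F Λ W*) ≤ √(2/n). -/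
open MeasureTheory ProbabilityTheory Matrix
open scoped BigOperators

noncomputable section

/-- The Rudin–Shapiro iterative process: `(rsPQ d).1` and `(rsPQ d).2` are the complementary
pair `(P_d, Q_d)` of `±1` sequences of length `2^d` (indexed by `ℕ`, junk values beyond). -/
def rsPQ : ℕ → (ℕ → ℤ) × (ℕ → ℤ)
  | 0 => (fun _ => 1, fun _ => 1)
  | d + 1 =>
      ((fun k => if k < 2 ^ d then (rsPQ d).1 k else (rsPQ d).2 (k - 2 ^ d)),
       (fun k => if k < 2 ^ d then (rsPQ d).1 k else -((rsPQ d).2 (k - 2 ^ d))))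

/-- The Rudin–Shapiro (Golay) sequence of length `2^d`. -/
def rudinShapiro (d : ℕ) : ℕ → ℤ := (rsPQ d).1

/-- The (transposed) orthonormal Haar wavelet matrix `W*` of size `2^l × 2^l`, defined by the
recursion `W₁* = [1]`, `W_{2^{l+1}}* = (1/√2) [ W_{2^l}* ⊗ (1,1)ᵀ , I_{2^l} ⊗ (1,−1)ᵀ ]`
(entries indexed by `ℕ`, junk values beyond `2^l`). -/
noncomputable def haarT : ℕ → ℕ → ℕ → ℝ
  | 0, _, _ => 1
  | l + 1, r, c =>
      if c < 2 ^ l then (1 / Real.sqrt 2) * haarT l (r / 2) c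
      else if r / 2 = c - 2 ^ l then
        (1 / Real.sqrt 2) * (if r % 2 = 0 then 1 else -1)
      else 0

/-- The Haar matrix `W*` of size `2^d`, as a complex matrix. -/
noncomputable def haarMatrix (d : ℕ) : Matrix (Fin (2 ^ d)) (Fin (2 ^ d)) ℂ :=
  fun r c => ((haarT d (r : ℕ) (c : ℕ) : ℝ) : ℂ)

noncomputable def Ppoly (m : ℕ) (z : ℂ) : ℂ :=
  ∑ u ∈ Finset.range (2 ^ m), ((rsPQ m).1 u : ℂ) * z ^ u

noncomputable def Qpoly (m : ℕ) (z : ℂ) : ℂ :=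
  ∑ u ∈ Finset.range (2 ^ m), ((rsPQ m).2 u : ℂ) * z ^ u

lemma Ppoly_succ (m : ℕ) (z : ℂ) :
    Ppoly (m + 1) z = Ppoly m z + z ^ (2 ^ m) * Qpoly m z := by
  have h2 : 2 ^ (m + 1) = 2 ^ m + 2 ^ m := by ring
  rw [Ppoly, h2, Finset.sum_range_add]
  congr 1
  · refine Finset.sum_congr rfl fun u hu => ?_
    rw [Finset.mem_range] at hu
    simp [rsPQ, hu]
  · rw [Qpoly, Finset.mul_sum]
    refine Finset.sum_congr rfl fun u hu => ?_
    have : ¬ (2 ^ m + u < 2 ^ m) := by omega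
    simp only [rsPQ, this, if_false]
    rw [Nat.add_sub_cancel_left, pow_add]
    ring

lemma Qpoly_succ (m : ℕ) (z : ℂ) :
    Qpoly (m + 1) z = Ppoly m z - z ^ (2 ^ m) * Qpoly m z := by
  have h2 : 2 ^ (m + 1) = 2 ^ m + 2 ^ m := by ring
  rw [Qpoly, h2, Finset.sum_range_add]
  rw [sub_eq_add_neg]
  congr 1
  · refine Finset.sum_congr rfl fun u hu => ?_
    rw [Finset.mem_range] at hu
    simp [rsPQ, hu]
  · rw [Qpoly, Finset.mul_sum, ← Finset.sum_neg_distrib]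
    refine Finset.sum_congr rfl fun u hu => ?_
    have : ¬ (2 ^ m + u < 2 ^ m) := by omega
    simp only [rsPQ, this, if_false]
    rw [Nat.add_sub_cancel_left, pow_add]
    push_cast
    ring

lemma parallelogram (a b : ℂ) :
    ‖a + b‖ ^ 2 + ‖a - b‖ ^ 2
      = 2 * (‖a‖ ^ 2 + ‖b‖ ^ 2) := by
  simp only [← Complex.normSq_eq_norm_sq, Complex.normSq_add, Complex.normSq_sub]
  ring

lemma golay (m : ℕ) (z : ℂ) (hz : ‖z‖ = 1) :
    ‖Ppoly m z‖ ^ 2 + ‖Qpoly m z‖ ^ 2 = 2 * 2 ^ m := by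
  induction m with
  | zero => simp [Ppoly, Qpoly, rsPQ]; norm_num
  | succ m ih =>
      rw [Ppoly_succ, Qpoly_succ, parallelogram]
      have hzz : ‖z ^ 2 ^ m * Qpoly m z‖ = ‖Qpoly m z‖ := by
        rw [norm_mul, norm_pow, hz, one_pow, one_mul]
      rw [hzz, ih]
      ring

lemma abs_Ppoly_le (m : ℕ) (z : ℂ) (hz : ‖z‖ = 1) :
    ‖Ppoly m z‖ ≤ Real.sqrt 2 * Real.sqrt 2 ^ m := by
  have h := golay m z hz
  have hs : Real.sqrt 2 * Real.sqrt 2 = 2 := Real.mul_self_sqrt (by norm_num)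
  have hsq : (Real.sqrt 2 * Real.sqrt 2 ^ m) ^ 2 = 2 * 2 ^ m := by
    rw [mul_pow, ← pow_mul, pow_two, hs, mul_comm m 2, pow_mul, pow_two, hs]
  have h1 : ‖Ppoly m z‖ ^ 2 ≤ (Real.sqrt 2 * Real.sqrt 2 ^ m) ^ 2 := by
    rw [hsq]; nlinarith [sq_nonneg (‖Qpoly m z‖)]
  have h2 := Real.sqrt_le_sqrt h1
  rwa [Real.sqrt_sq (norm_nonneg _), Real.sqrt_sq (by positivity)] at h2

lemma abs_Qpoly_le (m : ℕ) (z : ℂ) (hz : ‖z‖ = 1) :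
    ‖Qpoly m z‖ ≤ Real.sqrt 2 * Real.sqrt 2 ^ m := by
  have h := golay m z hz
  have hs : Real.sqrt 2 * Real.sqrt 2 = 2 := Real.mul_self_sqrt (by norm_num)
  have hsq : (Real.sqrt 2 * Real.sqrt 2 ^ m) ^ 2 = 2 * 2 ^ m := by
    rw [mul_pow, ← pow_mul, pow_two, hs, mul_comm m 2, pow_mul, pow_two, hs]
  have h1 : ‖Qpoly m z‖ ^ 2 ≤ (Real.sqrt 2 * Real.sqrt 2 ^ m) ^ 2 := by
    rw [hsq]; nlinarith [sq_nonneg (‖Ppoly m z‖)]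
  have h2 := Real.sqrt_le_sqrt h1
  rwa [Real.sqrt_sq (norm_nonneg _), Real.sqrt_sq (by positivity)] at h2

lemma rs_restrict : ∀ d m, m ≤ d → ∀ t, t < 2 ^ (d - m) →
    ∃ ε : ℤ, (ε = 1 ∨ ε = -1) ∧
      ((∀ u, u < 2 ^ m → (rsPQ d).1 (t * 2 ^ m + u) = ε * (rsPQ m).1 u) ∨
       (∀ u, u < 2 ^ m → (rsPQ d).1 (t * 2 ^ m + u) = ε * (rsPQ m).2 u)) ∧
      ∃ ε' : ℤ, (ε' = 1 ∨ ε' = -1) ∧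
      ((∀ u, u < 2 ^ m → (rsPQ d).2 (t * 2 ^ m + u) = ε' * (rsPQ m).1 u) ∨
       (∀ u, u < 2 ^ m → (rsPQ d).2 (t * 2 ^ m + u) = ε' * (rsPQ m).2 u)) := by
  intro d
  induction d with
  | zero =>
      intro m hm t ht
      interval_cases m
      simp at ht
      subst ht
      exact ⟨1, Or.inl rfl, Or.inl (by simp), 1, Or.inl rfl, Or.inr (by simp)⟩
  | succ d ih =>
      intro m hm t ht
      rcases Nat.eq_or_lt_of_le hm with hmd | hmd
      · subst hmd
        simp at ht
        subst ht
        exact ⟨1, Or.inl rfl, Or.inl (by simp), 1, Or.inl rfl, Or.inr (by simp)⟩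
      · have hmd' : m ≤ d := Nat.lt_succ_iff.mp hmd
        have hsub : d + 1 - m = (d - m) + 1 := by omega
        rw [hsub, pow_succ] at ht
        have hkey : 2 ^ (d - m) * 2 ^ m = 2 ^ d := by
          rw [← pow_add]; congr 1; omega
        by_cases hts : t < 2 ^ (d - m)
        · have hidx : ∀ u, u < 2 ^ m → t * 2 ^ m + u < 2 ^ d := by
            intro u hu
            have h1 : t + 1 ≤ 2 ^ (d - m) := hts
            calc t * 2 ^ m + u < (t + 1) * 2 ^ m := by nlinarith
            _ ≤ 2 ^ (d - m) * 2 ^ m := Nat.mul_le_mul_right _ h1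
            _ = 2 ^ d := hkey
          obtain ⟨ε, hε, hP, ε', hε', hQ⟩ := ih m hmd' t hts
          refine ⟨ε, hε, ?_, ε, hε, ?_⟩
          · rcases hP with h | h
            · exact Or.inl fun u hu => by
                simp only [rsPQ, hidx u hu, if_true]; exact h u hu
            · exact Or.inr fun u hu => by
                simp only [rsPQ, hidx u hu, if_true]; exact h u hu
          · rcases hP with h | h
            · exact Or.inl fun u hu => by
                simp only [rsPQ, hidx u hu, if_true]; exact h u hu
            · exact Or.inr fun u hu => by
                simp only [rsPQ, hidx u hu, if_true]; exact h u hu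
        · have hts2 : t - 2 ^ (d - m) < 2 ^ (d - m) := by omega
          have hge : 2 ^ d ≤ t * 2 ^ m := by
            calc 2 ^ d = 2 ^ (d - m) * 2 ^ m := hkey.symm
            _ ≤ t * 2 ^ m := Nat.mul_le_mul_right _ (by omega)
          have hidx : ∀ u, ¬ (t * 2 ^ m + u < 2 ^ d) := fun u => by omega
          have hshift : ∀ u, t * 2 ^ m + u - 2 ^ d = (t - 2 ^ (d - m)) * 2 ^ m + u := by
            intro u
            rw [Nat.sub_mul]
            omega
          obtain ⟨ε, hε, hP, ε', hε', hQ⟩ := ih m hmd' (t - 2 ^ (d - m)) hts2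
          refine ⟨ε', hε', ?_, -ε', ?_, ?_⟩
          · rcases hQ with h | h
            · exact Or.inl fun u hu => by
                simp only [rsPQ, hidx u, if_false, hshift u]; exact h u hu
            · exact Or.inr fun u hu => by
                simp only [rsPQ, hidx u, if_false, hshift u]; exact h u hu
          · rcases hε' with h | h <;> simp [h]
          · rcases hQ with h | h
            · exact Or.inl fun u hu => by
                simp only [rsPQ, hidx u, if_false, hshift u, h u hu]; ring
            · exact Or.inr fun u hu => by
                simp only [rsPQ, hidx u, if_false, hshift u, h u hu]; ring

lemma rs_flip (m : ℕ) (u : ℕ) (hu : u < 2 ^ (m + 1)) :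
    ((if u / 2 ^ m % 2 = 0 then (1 : ℤ) else -1) * (rsPQ (m + 1)).1 u = (rsPQ (m + 1)).2 u) ∧
    ((if u / 2 ^ m % 2 = 0 then (1 : ℤ) else -1) * (rsPQ (m + 1)).2 u = (rsPQ (m + 1)).1 u) := by
  by_cases h : u < 2 ^ m
  · have h0 : u / 2 ^ m = 0 := Nat.div_eq_of_lt h
    simp [rsPQ, h, h0]
  · have h1 : u / 2 ^ m = 1 := by
      have h2 : 2 ^ (m + 1) = 2 ^ m * 2 := by ring
      exact Nat.div_eq_of_lt_le (by omega) (by omega)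
    simp [rsPQ, h, h1]

lemma rs_flip' (m : ℕ) (hm : 1 ≤ m) (u : ℕ) (hu : u < 2 ^ m) :
    ((if u / 2 ^ (m - 1) % 2 = 0 then (1 : ℤ) else -1) * (rsPQ m).1 u = (rsPQ m).2 u) ∧
    ((if u / 2 ^ (m - 1) % 2 = 0 then (1 : ℤ) else -1) * (rsPQ m).2 u = (rsPQ m).1 u) := by
  obtain ⟨m0, rfl⟩ : ∃ m0, m = m0 + 1 := ⟨m - 1, by omega⟩
  simpa using rs_flip m0 u hu

lemma haarT_zero (d : ℕ) (r : ℕ) : haarT d r 0 = (Real.sqrt 2)⁻¹ ^ d := by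
  induction d generalizing r with
  | zero => simp [haarT]
  | succ d ih =>
      have : (0 : ℕ) < 2 ^ d := pow_pos (by norm_num) d
      rw [haarT, if_pos this, ih, pow_succ]
      rw [one_div]
      ring

lemma haar_col (d : ℕ) : ∀ k, 0 < k → k < 2 ^ d →
    ∃ m t, 1 ≤ m ∧ m ≤ d ∧ t < 2 ^ (d - m) ∧
      ∀ r, haarT d r k =
        if r / 2 ^ m = t then
          (Real.sqrt 2)⁻¹ ^ m * (if r / 2 ^ (m - 1) % 2 = 0 then 1 else -1)
        else 0 := by
  induction d with
  | zero => intro k hk hk2; omega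
  | succ d ih =>
      intro k hk hk2
      by_cases h : k < 2 ^ d
      · obtain ⟨m, t, hm1, hmd, ht, hval⟩ := ih k hk h
        refine ⟨m + 1, t, by omega, by omega,
          by rw [show d + 1 - (m + 1) = d - m by omega]; exact ht, fun r => ?_⟩
        rw [haarT, if_pos h, hval (r / 2)]
        have e1 : r / 2 / 2 ^ m = r / 2 ^ (m + 1) := by
          rw [Nat.div_div_eq_div_mul, pow_succ, mul_comm]
        have e2 : r / 2 / 2 ^ (m - 1) = r / 2 ^ m := by
          rw [Nat.div_div_eq_div_mul, show 2 * 2 ^ (m - 1) = 2 ^ m by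
            rw [← pow_succ']; congr 1; omega]
        rw [e1, e2]
        rw [show m + 1 - 1 = m by omega]
        by_cases hc : r / 2 ^ (m + 1) = t
        · rw [if_pos hc, if_pos hc, pow_succ, one_div]; ring
        · rw [if_neg hc, if_neg hc, mul_zero]
      · refine ⟨1, k - 2 ^ d, le_refl 1, by omega,
          by rw [show d + 1 - 1 = d by omega]; omega, fun r => ?_⟩
        rw [haarT, if_neg h]
        simp only [pow_one, pow_zero, Nat.div_one]
        by_cases hc : r / 2 = k - 2 ^ d
        · rw [if_pos hc, if_pos hc]; norm_num
        · rw [if_neg hc, if_neg hc]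

lemma sum_range_mul {M : Type*} [AddCommMonoid M] (f : ℕ → M) (a b : ℕ) :
    ∑ u ∈ Finset.range (a * b), f u
      = ∑ q ∈ Finset.range a, ∑ v ∈ Finset.range b, f (q * b + v) := by
  induction a with
  | zero => simp
  | succ a ih =>
      rw [Nat.succ_mul, Finset.sum_range_add, ih, Finset.sum_range_succ]

lemma S_bound (d k : ℕ) (hk : k < 2 ^ d) (z : ℂ) (hz : ‖z‖ = 1) :
    ‖∑ u ∈ Finset.range (2 ^ d),
      ((rsPQ d).1 u : ℂ) * ((haarT d u k : ℝ) : ℂ) * z ^ u‖ ≤ Real.sqrt 2 := by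
  have hs2 : (0 : ℝ) < Real.sqrt 2 := Real.sqrt_pos.mpr (by norm_num)
  have hpow : ∀ m : ℕ, (Real.sqrt 2)⁻¹ ^ m * Real.sqrt 2 ^ m = 1 := by
    intro m; rw [← mul_pow, inv_mul_cancel₀ (ne_of_gt hs2), one_pow]
  rcases Nat.eq_zero_or_pos k with hk0 | hk0
  · subst hk0
    have hcongr : ∀ u ∈ Finset.range (2 ^ d),
        ((rsPQ d).1 u : ℂ) * ((haarT d u 0 : ℝ) : ℂ) * z ^ u
          = (((Real.sqrt 2)⁻¹ ^ d : ℝ) : ℂ) * (((rsPQ d).1 u : ℂ) * z ^ u) := by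
      intro u _; rw [haarT_zero]; push_cast; ring
    rw [Finset.sum_congr rfl hcongr, ← Finset.mul_sum]
    have hP : (∑ u ∈ Finset.range (2 ^ d), ((rsPQ d).1 u : ℂ) * z ^ u) = Ppoly d z := rfl
    rw [hP, norm_mul, Complex.norm_real, Real.norm_eq_abs, abs_of_nonneg (by positivity)]
    calc (Real.sqrt 2)⁻¹ ^ d * ‖Ppoly d z‖
        ≤ (Real.sqrt 2)⁻¹ ^ d * (Real.sqrt 2 * Real.sqrt 2 ^ d) :=
          mul_le_mul_of_nonneg_left (abs_Ppoly_le d z hz) (by positivity)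
      _ = Real.sqrt 2 := by
          rw [mul_comm (Real.sqrt 2), ← mul_assoc, hpow d, one_mul]
  · obtain ⟨m, t, hm1, hmd, ht, hval⟩ := haar_col d k hk0 hk
    have hkey : 2 ^ (d - m) * 2 ^ m = 2 ^ d := by rw [← pow_add]; congr 1; omega
    have hpos : (0 : ℕ) < 2 ^ m := pow_pos (by norm_num) m
    have hdiv : ∀ q v, v < 2 ^ m → (q * 2 ^ m + v) / 2 ^ m = q := by
      intro q v hv
      rw [add_comm, mul_comm, Nat.add_mul_div_left _ _ hpos, Nat.div_eq_of_lt hv, zero_add]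
    have hmod : ∀ v, v < 2 ^ m → (t * 2 ^ m + v) / 2 ^ (m - 1) % 2 = v / 2 ^ (m - 1) % 2 := by
      intro v hv
      have hpos1 : (0 : ℕ) < 2 ^ (m - 1) := pow_pos (by norm_num) (m - 1)
      have h1 : t * 2 ^ m + v = v + 2 ^ (m - 1) * (t * 2) := by
        rw [show (2 : ℕ) ^ m = 2 ^ (m - 1) * 2 by rw [← pow_succ]; congr 1; omega]
        ring
      rw [h1, Nat.add_mul_div_left _ _ hpos1, Nat.add_mul_mod_self_right]
    rw [show (2 : ℕ) ^ d = 2 ^ (d - m) * 2 ^ m from hkey.symm, sum_range_mul]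
    rw [Finset.sum_eq_single_of_mem t (Finset.mem_range.mpr ht) ?side]
    case side =>
      intro q _ hqt
      refine Finset.sum_eq_zero fun v hv => ?_
      rw [Finset.mem_range] at hv
      rw [hval, if_neg (by rw [hdiv q v hv]; exact hqt)]
      simp
    obtain ⟨σ, hσ, hPQ, -⟩ := rs_restrict d m hmd t ht
    have main : ∃ W : ℂ, ‖W‖ ≤ Real.sqrt 2 * Real.sqrt 2 ^ m ∧
        (∑ v ∈ Finset.range (2 ^ m),
          ((rsPQ d).1 (t * 2 ^ m + v) : ℂ) * ((haarT d (t * 2 ^ m + v) k : ℝ) : ℂ)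
            * z ^ (t * 2 ^ m + v))
          = (σ : ℂ) * (((Real.sqrt 2)⁻¹ ^ m : ℝ) : ℂ) * z ^ (t * 2 ^ m) * W := by
      rcases hPQ with hG | hG
      · refine ⟨Qpoly m z, abs_Qpoly_le m z hz, ?_⟩
        rw [Qpoly, Finset.mul_sum]
        refine Finset.sum_congr rfl fun v hv => ?_
        rw [Finset.mem_range] at hv
        rw [hval, if_pos (hdiv t v hv), hmod v hv, hG v hv]
        have h1 := (rs_flip' m hm1 v hv).1
        by_cases hc : v / 2 ^ (m - 1) % 2 = 0
        · rw [if_pos hc] at h1 ⊢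
          have h2 : ((rsPQ m).2 v : ℂ) = ((rsPQ m).1 v : ℂ) := by
            rw [← h1]; push_cast; ring
          rw [h2, pow_add]; push_cast; ring
        · rw [if_neg hc] at h1 ⊢
          have h2 : ((rsPQ m).2 v : ℂ) = -((rsPQ m).1 v : ℂ) := by
            rw [← h1]; push_cast; ring
          rw [h2, pow_add]; push_cast; ring
      · refine ⟨Ppoly m z, abs_Ppoly_le m z hz, ?_⟩
        rw [Ppoly, Finset.mul_sum]
        refine Finset.sum_congr rfl fun v hv => ?_
        rw [Finset.mem_range] at hv
        rw [hval, if_pos (hdiv t v hv), hmod v hv, hG v hv]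
        have h1 := (rs_flip' m hm1 v hv).2
        by_cases hc : v / 2 ^ (m - 1) % 2 = 0
        · rw [if_pos hc] at h1 ⊢
          have h2 : ((rsPQ m).1 v : ℂ) = ((rsPQ m).2 v : ℂ) := by
            rw [← h1]; push_cast; ring
          rw [h2, pow_add]; push_cast; ring
        · rw [if_neg hc] at h1 ⊢
          have h2 : ((rsPQ m).1 v : ℂ) = -((rsPQ m).2 v : ℂ) := by
            rw [← h1]; push_cast; ring
          rw [h2, pow_add]; push_cast; ring
    obtain ⟨W, hW, hsum⟩ := main
    rw [hsum, norm_mul, norm_mul, norm_mul, norm_pow, hz, one_pow, mul_one, Complex.norm_real, Real.norm_eq_abs]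
    have hσ1 : ‖((σ : ℤ) : ℂ)‖ = 1 := by rcases hσ with h | h <;> simp [h]
    rw [hσ1, one_mul, abs_of_nonneg (by positivity)]
    calc (Real.sqrt 2)⁻¹ ^ m * ‖W‖
        ≤ (Real.sqrt 2)⁻¹ ^ m * (Real.sqrt 2 * Real.sqrt 2 ^ m) :=
          mul_le_mul_of_nonneg_left hW (by positivity)
      _ = Real.sqrt 2 := by
          rw [mul_comm (Real.sqrt 2), ← mul_assoc, hpow m, one_mul]

/-- coherence bound `μ(F Λ W*) ≤ √(2/n)` for the Rudin–Shapiro Golay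
modulation `Λ` and the Haar wavelet matrix `W*`, `n = 2^d`. -/
theorem rudin_shapiro_coherence_haar (d : ℕ) :
    ∀ (j k : Fin (2 ^ d)),
      ‖(DFT (2 ^ d) *
        Matrix.diagonal (fun i : Fin (2 ^ d) => ((rudinShapiro d (i : ℕ) : ℤ) : ℂ)) *
        haarMatrix d) j k‖
      ≤ Real.sqrt (2 / (2 ^ d : ℕ)) := by
  intro j k
  have hn : (0 : ℝ) < ((2 ^ d : ℕ) : ℝ) := by positivity
  set z : ℂ := Complex.exp (-2 * (Real.pi : ℂ) * Complex.I * ((j : ℕ) : ℂ)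
      / (((2 ^ d : ℕ) : ℕ) : ℂ)) with hzdef
  have hz : ‖z‖ = 1 := by
    rw [hzdef, show (-2 * (Real.pi : ℂ) * Complex.I * ((j : ℕ) : ℂ) / (((2 ^ d : ℕ) : ℕ) : ℂ))
        = ((-2 * Real.pi * ((j : ℕ) : ℝ) / (((2 ^ d : ℕ) : ℕ) : ℝ) : ℝ) : ℂ) * Complex.I by
          push_cast; ring,
      Complex.norm_exp_ofReal_mul_I]
  have hrw : ((DFT (2 ^ d) *
        Matrix.diagonal (fun i : Fin (2 ^ d) => ((rudinShapiro d (i : ℕ) : ℤ) : ℂ)) *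
        haarMatrix d) j k)
      = ((1 / Real.sqrt ((2 ^ d : ℕ) : ℝ) : ℝ) : ℂ) *
        ∑ u ∈ Finset.range (2 ^ d),
          ((rsPQ d).1 u : ℂ) * ((haarT d u k : ℝ) : ℂ) * z ^ u := by
    rw [Matrix.mul_apply, Finset.mul_sum,
      ← Fin.sum_univ_eq_sum_range (fun u => ((1 / Real.sqrt ((2 ^ d : ℕ) : ℝ) : ℝ) : ℂ) *
        (((rsPQ d).1 u : ℂ) * ((haarT d u (k : ℕ) : ℝ) : ℂ) * z ^ u)) (2 ^ d)]
    refine Finset.sum_congr rfl fun i _ => ?_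
    rw [Matrix.mul_diagonal]
    simp only [DFT, haarMatrix, rudinShapiro]
    rw [show (-2 * (Real.pi : ℂ) * Complex.I * ((j : ℕ) : ℂ) * ((i : ℕ) : ℂ)
        / (((2 ^ d : ℕ) : ℕ) : ℂ))
        = ((i : ℕ) : ℂ) * (-2 * (Real.pi : ℂ) * Complex.I * ((j : ℕ) : ℂ)
          / (((2 ^ d : ℕ) : ℕ) : ℂ)) by ring,
      Complex.exp_nat_mul, ← hzdef]
    ring
  rw [hrw, norm_mul, Complex.norm_real, Real.norm_eq_abs,
    abs_of_nonneg (by positivity : (0 : ℝ) ≤ 1 / Real.sqrt ((2 ^ d : ℕ) : ℝ))]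
  have hb := S_bound d (k : ℕ) k.isLt z hz
  have hfin : 1 / Real.sqrt ((2 ^ d : ℕ) : ℝ) * Real.sqrt 2
      = Real.sqrt (2 / ((2 ^ d : ℕ) : ℝ)) := by
    rw [Real.sqrt_div (by norm_num : (0 : ℝ) ≤ 2)]
    ring
  calc 1 / Real.sqrt ((2 ^ d : ℕ) : ℝ) *
      ‖∑ u ∈ Finset.range (2 ^ d),
        ((rsPQ d).1 u : ℂ) * ((haarT d u (k : ℕ) : ℝ) : ℂ) * z ^ u‖
      ≤ 1 / Real.sqrt ((2 ^ d : ℕ) : ℝ) * Real.sqrt 2 :=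
        mul_le_mul_of_nonneg_left hb (by positivity)
    _ = Real.sqrt (2 / ((2 ^ d : ℕ) : ℝ)) := hfin

end
end
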